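/- Let r > 0, λ > 0, {v₀,v₁,w} a positive oriented orthonormal system, and α(t) = √(1+r²) w + r cos(λt/r) v₁ + r sin(λt/r) v₀. Then for every t ∈ ℝ: ⟨α̇(t), α̇(t)⟩ₘ = λ², ⟨α(t) ×ₘ α̇(t), α(t) ×ₘ α̇(t)⟩ₘ = λ², ⟨α̇(t), α(t) ×ₘ α̇(t)⟩ₘ = 0, ⟨α̇(t), α(t)⟩ₘ = 0, and ⟨α(t) ×ₘ α̇(t), α(t)⟩ₘ = 0; in particular {α̇(t), α(t) ×ₘ α̇(t)} is a Minkowski-orthogonal frame of the tangent plane to ℍ at α(t). -/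

import Mathlib

noncomputable section

open Real

/-- The Minkowski inner product on ℝ³. -/
def mink (v w : Fin 3 → ℝ) : ℝ := v 0 * w 0 + v 1 * w 1 - v 2 * w 2

/-- The twisted cross product on ℝ³. -/
def mcross (v w : Fin 3 → ℝ) : Fin 3 → ℝ :=
  ![v 2 * w 1 - v 1 * w 2, v 0 * w 2 - v 2 * w 0, v 0 * w 1 - v 1 * w 0]

/-- A positive oriented orthonormal system with respect to the Minkowski metric. -/
def posOrth (v₀ v₁ w : Fin 3 → ℝ) : Prop :=
  mink v₀ v₁ = 0 ∧ mink v₀ w = 0 ∧ mink v₁ w = 0 ∧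
  mink v₀ v₀ = 1 ∧ mink v₁ v₁ = 1 ∧ mink w w = -1 ∧
  mcross v₀ v₁ = w

/-- Membership in the hyperbolic plane ℍ ⊂ ℝ³. -/
def inH (x : Fin 3 → ℝ) : Prop := x 2 ^ 2 - x 0 ^ 2 - x 1 ^ 2 = 1 ∧ 0 < x 2

/-- Lagrange-type identity for the twisted cross product. -/
lemma mcross_norm (u v : Fin 3 → ℝ) :
    mink (mcross u v) (mcross u v) = mink u v ^ 2 - mink u u * mink v v := by
  simp only [mink, mcross, Matrix.cons_val_zero, Matrix.cons_val_one, Matrix.head_cons,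
    Matrix.cons_val_two, Matrix.tail_cons]
  ring

lemma mcross_left (u v : Fin 3 → ℝ) : mink (mcross u v) u = 0 := by
  simp only [mink, mcross, Matrix.cons_val_zero, Matrix.cons_val_one, Matrix.head_cons,
    Matrix.cons_val_two, Matrix.tail_cons]
  ring

lemma mcross_right (u v : Fin 3 → ℝ) : mink (mcross u v) v = 0 := by
  simp only [mink, mcross, Matrix.cons_val_zero, Matrix.cons_val_one, Matrix.head_cons,
    Matrix.cons_val_two, Matrix.tail_cons]
  ring

lemma mink_symm (u v : Fin 3 → ℝ) : mink u v = mink v u := by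
  simp only [mink]; ring

/-- {α̇, α ×ₘ α̇} is a Minkowski-orthogonal frame of the tangent plane
to ℍ along α, both vectors having squared length λ². -/
theorem stmt_6 (r lam : ℝ) (hr : 0 < r) (hlam : 0 < lam) (v₀ v₁ w : Fin 3 → ℝ)
    (hsys : posOrth v₀ v₁ w) :
    let α : ℝ → Fin 3 → ℝ := fun t =>
      Real.sqrt (1 + r ^ 2) • w + (r * Real.cos (lam * t / r)) • v₁ +
        (r * Real.sin (lam * t / r)) • v₀
    ∀ t : ℝ,
      mink (deriv α t) (deriv α t) = lam ^ 2 ∧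
      mink (mcross (α t) (deriv α t)) (mcross (α t) (deriv α t)) = lam ^ 2 ∧
      mink (deriv α t) (mcross (α t) (deriv α t)) = 0 ∧
      mink (deriv α t) (α t) = 0 ∧
      mink (mcross (α t) (deriv α t)) (α t) = 0 := by
  intro α t
  obtain ⟨h01, h0w, h1w, h00, h11, hww, hcr⟩ := hsys
  -- derivative
  have harg : HasDerivAt (fun t : ℝ => lam * t / r) (lam / r) t := by
    simpa using ((hasDerivAt_id t).const_mul lam).div_const r
  have hcos : HasDerivAt (fun t : ℝ => r * Real.cos (lam * t / r))
      (-(lam * Real.sin (lam * t / r))) t := by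
    have := ((Real.hasDerivAt_cos (lam * t / r)).comp t harg).const_mul r
    refine this.congr_deriv ?_
    field_simp
  have hsin : HasDerivAt (fun t : ℝ => r * Real.sin (lam * t / r))
      (lam * Real.cos (lam * t / r)) t := by
    have := ((Real.hasDerivAt_sin (lam * t / r)).comp t harg).const_mul r
    refine this.congr_deriv ?_
    field_simp
  have hd : HasDerivAt α
      ((-(lam * Real.sin (lam * t / r))) • v₁ + (lam * Real.cos (lam * t / r)) • v₀) t := by
    have h1 := (hcos.smul_const v₁)
    have h2 := (hsin.smul_const v₀)
    have h0 : HasDerivAt (fun _ : ℝ => Real.sqrt (1 + r ^ 2) • w) (0 : Fin 3 → ℝ) t :=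
      hasDerivAt_const t _
    exact ((h0.add h1).add h2).congr_deriv (by simp)
  have hderiv : deriv α t = (-(lam * Real.sin (lam * t / r))) • v₁ +
      (lam * Real.cos (lam * t / r)) • v₀ := hd.deriv
  set q := Real.sqrt (1 + r ^ 2) with hq
  have hq2 : q ^ 2 = 1 + r ^ 2 := Real.sq_sqrt (by positivity)
  set c := Real.cos (lam * t / r) with hc
  set s := Real.sin (lam * t / r) with hs
  have hsc : s ^ 2 + c ^ 2 = 1 := Real.sin_sq_add_cos_sq _
  have hαt : α t = q • w + (r * c) • v₁ + (r * s) • v₀ := rfl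
  simp only [mink] at h01 h0w h1w h00 h11 hww
  -- component values
  have hval : ∀ (a b : ℝ) (u v : Fin 3 → ℝ) (i : Fin 3),
      (a • u + b • v) i = a * u i + b * v i := by intro a b u v i; simp
  have hmαα : mink (α t) (α t) = -1 := by
    simp only [hαt, mink, Pi.add_apply, Pi.smul_apply, smul_eq_mul]
    linear_combination q^2*hww + r^2*c^2*h11 + r^2*s^2*h00 + 2*q*r*c*h1w + 2*q*r*s*h0w +
      2*r^2*c*s*h01 + r^2*hsc - hq2
  have hmdd : mink (deriv α t) (deriv α t) = lam ^ 2 := by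
    simp only [hderiv, mink, Pi.add_apply, Pi.smul_apply, smul_eq_mul]
    linear_combination lam^2*s^2*h11 + lam^2*c^2*h00 - 2*lam^2*s*c*h01 + lam^2*hsc
  have hmdα : mink (deriv α t) (α t) = 0 := by
    simp only [hderiv, hαt, mink, Pi.add_apply, Pi.smul_apply, smul_eq_mul]
    linear_combination (-(lam*s*q))*h1w - lam*s*r*c*h11 - lam*s*r*s*h01 +
      lam*c*q*h0w + lam*c*r*c*h01 + lam*c*r*s*h00
  refine ⟨hmdd, ?_, ?_, hmdα, ?_⟩
  · rw [mcross_norm, hmαα, hmdd, mink_symm, hmdα]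
    ring
  · rw [mink_symm]; exact mcross_right _ _
  · exact mcross_left _ _
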